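/- Let G be a group, n ≥ 3, E the set of idempotents of End F_n(G), and IG(E) the free idempotent generated monoid over E. Let a, b : {1,…,n} → G with a(1) = b(1) = 1 and let j ∈ {1,…,n}. If a(j) = b(j) (equivalently, e_{1j} e_{a,1} = e_{1j} e_{b,1} in End F_n(G)), then ē_{11} ē_{a,j} ē_{11} = ē_{11} ē_{b,j} ē_{11} in IG(E). -/

import Mathlib

/-- An endomorphism of the rank-`n` free left `G`-act `F_n(G) = G × Fin n`
(the formal symbols `g x_i` are the pairs `(g, i)`), where the action is
`h • (g, i) = (h * g, i)` and equivariance says `(h • x) a = h • (x a)`. -/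
structure ActEnd (G : Type*) [Group G] (n : ℕ) : Type _ where
  toFun : G × Fin n → G × Fin n
  equivariant : ∀ (h : G) (x : G × Fin n),
    toFun (h * x.1, x.2) = (h * (toFun x).1, (toFun x).2)

namespace ActEnd

variable {G : Type*} [Group G] {n : ℕ}

/-- Composition is written left-to-right: `x (a * b) = (x a) b`. -/
instance : Monoid (ActEnd G n) where
  mul a b := ⟨fun x => b.toFun (a.toFun x), by
    intro h x
    try dsimp only
    rw [a.equivariant h x, b.equivariant]⟩
  one := ⟨id, fun _ _ => rfl⟩
  mul_assoc _ _ _ := rfl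
  one_mul _ := rfl
  mul_one _ := rfl

@[simp] theorem mul_toFun (a b : ActEnd G n) (x : G × Fin n) :
    (a * b).toFun x = b.toFun (a.toFun x) := rfl

theorem ext' {a b : ActEnd G n} (h : a.toFun = b.toFun) : a = b := by
  cases a; cases b; cases h; rfl

/-- The rank of an endomorphism of `F_n(G)`: the number of indices `j` such
that `G x_j` meets the image. -/
noncomputable def rank (a : ActEnd G n) : ℕ :=
  Nat.card {j : Fin n // ∃ x, (a.toFun x).2 = j}

end ActEnd

namespace ActEnd

variable {G : Type*} [Group G] {n : ℕ}

/-- The rank-1 idempotent `e_{a,j}` given by `(g x_t) e_{a,j} = (g * a t * (a j)⁻¹) x_j`.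
Taking `a` constantly `1` gives `e_{1j}`, and also `j = 0` gives `e_{11}`
(indices `1, …, n` are realised as `Fin n`, with `1 ↦ 0`). -/
def eaj (a : Fin n → G) (j : Fin n) : ActEnd G n :=
  ⟨fun x => (x.1 * a x.2 * (a j)⁻¹, j), by intro h x; simp [mul_assoc]⟩

theorem eaj_idem (a : Fin n → G) (j : Fin n) : eaj a j * eaj a j = eaj a j := by
  apply ext'
  funext x
  simp [eaj, mul_assoc]

/-- The map `a_g : g' x_t ↦ (g' * g) x_1`. -/
def aMap (g : G) (h0 : 0 < n) : ActEnd G n :=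
  ⟨fun x => (x.1 * g, ⟨0, h0⟩), by intro h x; simp [mul_assoc]⟩

end ActEnd

/-- The principal left ideal `M a` of `a`. -/
def lIdeal {M : Type*} [Monoid M] (a : M) : Set M := Set.range fun m => m * a

/-- The principal right ideal `a M` of `a`. -/
def rIdeal {M : Type*} [Monoid M] (a : M) : Set M := Set.range fun m => a * m

/-- The `H`-class of `e`: all elements that are both `L`- and `R`-related to `e`. -/
def hClass {M : Type*} [Monoid M] (e : M) : Set M :=
  {a | lIdeal a = lIdeal e ∧ rIdeal a = rIdeal e}

/-- The defining relation of the free idempotent generated monoid `IG(E)`: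
`ē f̄ = (e f)‾` whenever `{e, f} ∩ {e f, f e} ≠ ∅`. -/
def igRel (M : Type*) [Monoid M] :
    FreeMonoid {e : M // e * e = e} → FreeMonoid {e : M // e * e = e} → Prop :=
  fun x y => ∃ e f g : {e : M // e * e = e},
    (e.1 * f.1 = e.1 ∨ e.1 * f.1 = f.1 ∨ f.1 * e.1 = e.1 ∨ f.1 * e.1 = f.1) ∧
    e.1 * f.1 = g.1 ∧
    x = FreeMonoid.of e * FreeMonoid.of f ∧ y = FreeMonoid.of g

/-- The free idempotent generated monoid over the biordered set of idempotents
of `M`: the presented monoid with generators `ē` for each idempotent `e` and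
relations `ē f̄ = (e f)‾` whenever `{e, f} ∩ {e f, f e} ≠ ∅`. -/
abbrev IG (M : Type*) [Monoid M] : Type _ := (conGen (igRel M)).Quotient

/-- The generator `ē` of `IG(E)` corresponding to the idempotent `e`. -/
def ebar {M : Type*} [Monoid M] (e : {e : M // e * e = e}) : IG M :=
  (conGen (igRel M)).mk' (FreeMonoid.of e)

/-- `ē_{a,j}` as an element of `IG(E)` for `E` the idempotents of `End F_n(G)`. -/
def igE {G : Type*} [Group G] {n : ℕ} (a : Fin n → G) (j : Fin n) : IG (ActEnd G n) :=
  ebar ⟨ActEnd.eaj a j, ActEnd.eaj_idem a j⟩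

/-- `ē_{11}` as an element of `IG(E)`. -/
def ig11 {G : Type*} [Group G] {n : ℕ} (h0 : 0 < n) : IG (ActEnd G n) :=
  igE (fun _ => (1 : G)) ⟨0, h0⟩


section Aux

open ActEnd

variable {G : Type*} [Group G] {n : ℕ}

/-- The auxiliary idempotent used to pass from `a` to `b`:
`x_t ↦ (b t * (a (p t))⁻¹) x_{p t}` where `p t = j` if `t = j` and `p t = 1` otherwise. -/
def fab (a b : Fin n → G) (j : Fin n) (h0 : 0 < n) : ActEnd G n :=
  ⟨fun x => (x.1 * (b x.2 * (a (if x.2 = j then j else ⟨0, h0⟩))⁻¹),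
      if x.2 = j then j else ⟨0, h0⟩),
   by intro h x; simp [mul_assoc]⟩

theorem fab_idem (a b : Fin n → G) (j : Fin n) (h0 : 0 < n)
    (ha : a ⟨0, h0⟩ = 1) (hb : b ⟨0, h0⟩ = 1) (hab : a j = b j) :
    fab a b j h0 * fab a b j h0 = fab a b j h0 := by
  apply ext'
  funext x
  obtain ⟨g, t⟩ := x
  by_cases ht : t = j <;> by_cases h0j : (⟨0, h0⟩ : Fin n) = j <;>
    simp [fab, ht, h0j, ha, hb, ← hab, mul_assoc]

theorem e11_mul_fab (a b : Fin n → G) (j : Fin n) (h0 : 0 < n)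
    (ha : a ⟨0, h0⟩ = 1) (hb : b ⟨0, h0⟩ = 1) (hab : a j = b j) :
    eaj (fun _ => (1 : G)) ⟨0, h0⟩ * fab a b j h0 = eaj (fun _ => (1 : G)) ⟨0, h0⟩ := by
  apply ext'
  funext x
  obtain ⟨g, t⟩ := x
  by_cases h0j : (⟨0, h0⟩ : Fin n) = j
  · subst h0j
    simp [fab, eaj, ha, hb]
  · simp [fab, eaj, h0j, ha, hb]

theorem eaj_mul_fab (a b : Fin n → G) (j : Fin n) (h0 : 0 < n) (hab : a j = b j) :
    eaj a j * fab a b j h0 = eaj a j := by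
  apply ext'
  funext x
  obtain ⟨g, t⟩ := x
  simp [fab, eaj, ← hab, mul_assoc]

theorem fab_mul_eaj (a b : Fin n → G) (j : Fin n) (h0 : 0 < n) (hab : a j = b j) :
    fab a b j h0 * eaj a j = eaj b j := by
  apply ext'
  funext x
  obtain ⟨g, t⟩ := x
  by_cases ht : t = j <;> simp [fab, eaj, ht, ← hab, mul_assoc]

end Aux

theorem ebar_basic {M : Type*} [Monoid M] (e f g : {e : M // e * e = e})
    (h1 : e.1 * f.1 = e.1 ∨ e.1 * f.1 = f.1 ∨ f.1 * e.1 = e.1 ∨ f.1 * e.1 = f.1)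
    (h2 : e.1 * f.1 = g.1) : ebar e * ebar f = ebar g := by
  unfold ebar
  rw [← map_mul]
  exact (Con.eq _).mpr (ConGen.Rel.of _ _ ⟨e, f, g, h1, h2, rfl, rfl⟩)

/-- If `a j = b j` (equivalently `e_{1j} e_{a,1} = e_{1j} e_{b,1}`), then
`ē_{11} ē_{a,j} ē_{11} = ē_{11} ē_{b,j} ē_{11}` in `IG(E)`. -/
theorem stmt14 {G : Type*} [Group G] {n : ℕ} (hn : 3 ≤ n)
    (a b : Fin n → G) (ha : a ⟨0, by omega⟩ = 1) (hb : b ⟨0, by omega⟩ = 1)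
    (j : Fin n) (hab : a j = b j) :
    ig11 (G := G) (n := n) (by omega) * igE a j * ig11 (G := G) (n := n) (by omega) =
      ig11 (G := G) (n := n) (by omega) * igE b j * ig11 (G := G) (n := n) (by omega) := by
  have h0 : 0 < n := by omega
  have hF : fab a b j h0 * fab a b j h0 = fab a b j h0 := fab_idem a b j h0 ha hb hab
  set eF : {e : ActEnd G n // e * e = e} := ⟨fab a b j h0, hF⟩ with heF
  set e11 : {e : ActEnd G n // e * e = e} :=
    ⟨ActEnd.eaj (fun _ => (1 : G)) ⟨0, h0⟩, ActEnd.eaj_idem _ _⟩ with he11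
  set ea : {e : ActEnd G n // e * e = e} := ⟨ActEnd.eaj a j, ActEnd.eaj_idem a j⟩ with hea
  set eb : {e : ActEnd G n // e * e = e} := ⟨ActEnd.eaj b j, ActEnd.eaj_idem b j⟩ with heb
  have r1 : ebar e11 * ebar eF = ebar e11 :=
    ebar_basic _ _ _ (Or.inl (e11_mul_fab a b j h0 ha hb hab)) (e11_mul_fab a b j h0 ha hb hab)
  have r2 : ebar eF * ebar ea = ebar eb :=
    ebar_basic _ _ _ (Or.inr (Or.inr (Or.inr (eaj_mul_fab a b j h0 hab))))
      (fab_mul_eaj a b j h0 hab)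
  show ebar e11 * ebar ea * ebar e11 = ebar e11 * ebar eb * ebar e11
  calc ebar e11 * ebar ea * ebar e11
      = ebar e11 * (ebar eF * ebar ea) * ebar e11 := by
        rw [← mul_assoc, r1]
    _ = ebar e11 * ebar eb * ebar e11 := by rw [r2]
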